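/- arXiv:2110.08549 — 5 statements merged into one kernel-verified Lean document; each statement's English description precedes it below -/
import Mathlib

section
/- The complement of the discharging flexibility of a fleet relative to the nonnegative quadrant, F^∁_{p̄,x} = {(p,E) ∈ [0,∞)² : E > Ω_{p̄,x}(p)}, is a convex subset of ℝ². -/
open MeasureTheory Set Finset

/-- The E-p transform of a signal `P`: the energy required above power rating `p`. -/
noncomputable def EpTransform (P : ℝ → ℝ) (p : ℝ) : ℝ :=
  ∫ t in Set.Ioi (0:ℝ), max (P t - p) 0

/-- The worst-case reference signal `R_{p̄,x}(t) = Σᵢ p̄ᵢ·𝟙[0 ≤ t < xᵢ]`. -/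
noncomputable def worstCase {n : ℕ} (pbar x : Fin n → ℝ) (t : ℝ) : ℝ :=
  ∑ i, if 0 ≤ t ∧ t < x i then pbar i else 0

/-- The discharging capacity curve `Ω_{p̄,x}`. -/
noncomputable def capacity {n : ℕ} (pbar x : Fin n → ℝ) (p : ℝ) : ℝ :=
  EpTransform (worstCase pbar x) p

lemma worstCase_measurable {n : ℕ} (pbar x : Fin n → ℝ) :
    Measurable (worstCase pbar x) := by
  unfold worstCase
  apply Finset.measurable_sum
  intro i _
  have h : (fun t : ℝ => if 0 ≤ t ∧ t < x i then pbar i else 0)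
      = Set.indicator (Set.Ico 0 (x i)) (fun _ => pbar i) := by
    funext t; simp [Set.indicator, Set.mem_Ico]
  rw [h]
  exact measurable_const.indicator measurableSet_Ico

lemma worstCase_nonneg {n : ℕ} (pbar x : Fin n → ℝ) (hp : ∀ i, 0 < pbar i) (t : ℝ) :
    0 ≤ worstCase pbar x t := by
  apply Finset.sum_nonneg
  intro i _
  split <;> [exact (hp i).le; rfl]

lemma worstCase_le {n : ℕ} (pbar x : Fin n → ℝ) (hp : ∀ i, 0 < pbar i) (t : ℝ) :
    worstCase pbar x t ≤ ∑ i, pbar i := by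
  apply Finset.sum_le_sum
  intro i _
  split <;> [skip; exact (hp i).le]; exact le_refl _

lemma worstCase_eq_zero {n : ℕ} (pbar x : Fin n → ℝ) (hx : ∀ i, 0 ≤ x i)
    {t : ℝ} (ht : (∑ i, x i) ≤ t) : worstCase pbar x t = 0 := by
  apply Finset.sum_eq_zero
  intro i _
  have hxi : x i ≤ ∑ j, x j :=
    Finset.single_le_sum (fun j _ => hx j) (Finset.mem_univ i)
  have : ¬ t < x i := not_lt.2 (hxi.trans ht)
  simp [this]

lemma integrable_aux {n : ℕ} (pbar x : Fin n → ℝ) (hp : ∀ i, 0 < pbar i)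
    (hx : ∀ i, 0 ≤ x i) {p : ℝ} (hp0 : 0 ≤ p) :
    IntegrableOn (fun t => max (worstCase pbar x t - p) 0) (Set.Ioi 0) := by
  set M := ∑ i, x i with hM
  have hM0 : 0 ≤ M := Finset.sum_nonneg fun i _ => hx i
  have hmeas : Measurable (fun t => max (worstCase pbar x t - p) 0) :=
    ((worstCase_measurable pbar x).sub measurable_const).max measurable_const
  have h1 : IntegrableOn (fun t => max (worstCase pbar x t - p) 0) (Set.Ioc 0 M) := by
    apply Integrable.mono' (g := fun _ => ∑ i, pbar i)
    · exact integrableOn_const measure_Ioc_lt_top.ne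
    · exact hmeas.aestronglyMeasurable
    · filter_upwards with t
      rw [Real.norm_eq_abs, abs_of_nonneg (le_max_right _ _)]
      apply max_le
      · have := worstCase_le pbar x hp t
        linarith
      · exact Finset.sum_nonneg fun i _ => (hp i).le
  have h2 : IntegrableOn (fun t => max (worstCase pbar x t - p) 0) (Set.Ioi M) := by
    have heq : Set.EqOn (fun _ => (0:ℝ)) (fun t => max (worstCase pbar x t - p) 0)
        (Set.Ioi M) := by
      intro t ht
      have h0 := worstCase_eq_zero pbar x hx (le_of_lt ht)
      simp only [h0]
      rw [max_eq_right (by linarith)]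
    exact (integrableOn_zero).congr_fun heq measurableSet_Ioi
  have := h1.union h2
  apply this.mono_set
  intro t ht
  rcases le_or_gt t M with h | h
  · exact Or.inl ⟨ht, h⟩
  · exact Or.inr h

lemma capacity_convex_ineq {n : ℕ} (pbar x : Fin n → ℝ) (hp : ∀ i, 0 < pbar i)
    (hx : ∀ i, 0 ≤ x i) {p q a b : ℝ} (hp0 : 0 ≤ p) (hq0 : 0 ≤ q)
    (ha : 0 ≤ a) (hb : 0 ≤ b) (hab : a + b = 1) :
    capacity pbar x (a * p + b * q) ≤ a * capacity pbar x p + b * capacity pbar x q := by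
  have hpq0 : 0 ≤ a * p + b * q := by positivity
  have hip := integrable_aux pbar x hp hx hp0
  have hiq := integrable_aux pbar x hp hx hq0
  have hipq := integrable_aux pbar x hp hx hpq0
  have hsum : Integrable (fun t => a * max (worstCase pbar x t - p) 0
      + b * max (worstCase pbar x t - q) 0)
      (volume.restrict (Set.Ioi 0)) := (hip.const_mul a).add (hiq.const_mul b)
  unfold capacity EpTransform
  calc ∫ t in Set.Ioi (0:ℝ), max (worstCase pbar x t - (a * p + b * q)) 0
      ≤ ∫ t in Set.Ioi (0:ℝ), (a * max (worstCase pbar x t - p) 0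
        + b * max (worstCase pbar x t - q) 0) := by
        apply integral_mono hipq hsum
        intro t
        dsimp only
        have h1 : worstCase pbar x t - (a * p + b * q)
            = a * (worstCase pbar x t - p) + b * (worstCase pbar x t - q) := by
          linear_combination (-(worstCase pbar x t)) * hab
        apply max_le
        · rw [h1]
          have := mul_le_mul_of_nonneg_left (le_max_left (worstCase pbar x t - p) 0) ha
          have := mul_le_mul_of_nonneg_left (le_max_left (worstCase pbar x t - q) 0) hb
          linarith
        · have := mul_nonneg ha (le_max_right (worstCase pbar x t - p) 0)
          have := mul_nonneg hb (le_max_right (worstCase pbar x t - q) 0)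
          linarith
    _ = a * (∫ t in Set.Ioi (0:ℝ), max (worstCase pbar x t - p) 0)
        + b * (∫ t in Set.Ioi (0:ℝ), max (worstCase pbar x t - q) 0) := by
        rw [integral_add (hip.const_mul a) (hiq.const_mul b),
          MeasureTheory.integral_const_mul, MeasureTheory.integral_const_mul]

/-- The complement of the discharging flexibility, relative to the nonnegative quadrant,
`F^∁_{p̄,x} = {(p,E) ∈ [0,∞)² : E > Ω_{p̄,x}(p)}`, is convex. -/
theorem flexibility_compl_convex {n : ℕ} (pbar x : Fin n → ℝ)
    (hp : ∀ i, 0 < pbar i) (hx : ∀ i, 0 ≤ x i) :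
    Convex ℝ {q : ℝ × ℝ | 0 ≤ q.1 ∧ 0 ≤ q.2 ∧ capacity pbar x q.1 < q.2} := by
  rintro ⟨p, E⟩ ⟨hp1, hE1, hcp⟩ ⟨q, F⟩ ⟨hq1, hF1, hcq⟩ a b ha hb hab
  simp only [Set.mem_setOf_eq, Prod.smul_mk, Prod.mk_add_mk, smul_eq_mul]
  refine ⟨by positivity, by positivity, ?_⟩
  have hkey := capacity_convex_ineq pbar x hp hx hp1 hq1 ha hb hab
  have hstrict : a * capacity pbar x p + b * capacity pbar x q < a * E + b * F := by
    rcases ha.lt_or_eq with ha' | ha'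
    · have h1 : a * capacity pbar x p < a * E := by nlinarith
      have h2 : b * capacity pbar x q ≤ b * F := by nlinarith
      linarith
    · have hb1 : b = 1 := by linarith
      simp [← ha', hb1] at *
      linarith
  linarith
end

section
/- Suppose the devices of a fleet are indexed so that x₁ ≥ x₂ ≥ ... ≥ xₙ ≥ 0, and let P_k = Σ_{i=1}^k p̄ᵢ (with P₀ = 0). Then the capacity curve is piecewise linear: for every k ∈ {1,...,n} and every p ∈ [P_{k−1}, P_k], Ω_{p̄,x}(p) = Σ_{i=k+1}^n p̄ᵢ xᵢ + (P_k − p)·x_k. In particular, Ω_{p̄,x}(P_k) = Σ_{i=k+1}^n p̄ᵢ xᵢ for k = 0, 1, ..., n. -/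
open MeasureTheory Set Finset

/-- Cumulative power `P_k = Σ_{i=1}^k p̄ᵢ` (1-based description, `P₀ = 0`). -/
def cumPower {n : ℕ} (pbar : Fin n → ℝ) (k : ℕ) : ℝ :=
  ∑ i : Fin n, if (i : ℕ) < k then pbar i else 0


lemma indFun (c A : ℝ) :
    (fun t : ℝ => if 0 ≤ t ∧ t < c then A else 0) = (Set.Ico 0 c).indicator (fun _ => A) := by
  funext t
  simp [Set.indicator_apply, Set.mem_Ico]

lemma intOn (c A : ℝ) :
    IntegrableOn (fun t : ℝ => if 0 ≤ t ∧ t < c then A else 0) (Set.Ioi 0) := by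
  rw [indFun]
  apply Integrable.integrableOn
  rw [integrable_indicator_iff measurableSet_Ico]
  exact integrableOn_const (by simp [Real.volume_Ico])

lemma intVal (c A : ℝ) (hc : 0 ≤ c) :
    ∫ t in Set.Ioi (0:ℝ), (if 0 ≤ t ∧ t < c then A else 0) = A * c := by
  rw [indFun, MeasureTheory.setIntegral_indicator measurableSet_Ico]
  have : Set.Ioi (0:ℝ) ∩ Set.Ico 0 c = Set.Ioo 0 c := by
    ext t; simp only [Set.mem_inter_iff, Set.mem_Ioi, Set.mem_Ico, Set.mem_Ioo]
    constructor
    · rintro ⟨h1, _, h2⟩; exact ⟨h1, h2⟩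
    · rintro ⟨h1, h2⟩; exact ⟨h1, h1.le, h2⟩
  rw [this, MeasureTheory.setIntegral_const, Real.volume_real_Ioo_of_le hc,
    smul_eq_mul, mul_comm]
  ring

/-- If devices are indexed with nonincreasing times-to-go, the capacity curve is piecewise
linear: on each interval `[P_{k-1}, P_k]` it is affine with slope `-x_k`, and at the
breakpoints `Ω(P_k) = Σ_{i=k+1}^n p̄ᵢ xᵢ`. -/
theorem capacity_piecewise_linear {n : ℕ} (pbar x : Fin n → ℝ)
    (hp : ∀ i, 0 < pbar i) (hx : ∀ i, 0 ≤ x i)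
    (hsorted : ∀ i j : Fin n, i ≤ j → x j ≤ x i) :
    (∀ k : ℕ, ∀ _h1 : 1 ≤ k, ∀ hkn : k ≤ n, ∀ p : ℝ,
        cumPower pbar (k - 1) ≤ p → p ≤ cumPower pbar k →
        capacity pbar x p =
          (∑ i : Fin n, if k ≤ (i : ℕ) then pbar i * x i else 0)
            + (cumPower pbar k - p) * x ⟨k - 1, by omega⟩) ∧
    (∀ k : ℕ, k ≤ n →
        capacity pbar x (cumPower pbar k)
          = ∑ i : Fin n, if k ≤ (i : ℕ) then pbar i * x i else 0) := by
  have part1 : ∀ k : ℕ, ∀ _h1 : 1 ≤ k, ∀ hkn : k ≤ n, ∀ p : ℝ,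
      cumPower pbar (k - 1) ≤ p → p ≤ cumPower pbar k →
      capacity pbar x p =
        (∑ i : Fin n, if k ≤ (i : ℕ) then pbar i * x i else 0)
          + (cumPower pbar k - p) * x ⟨k - 1, by omega⟩ := by
    intro k h1 hkn p hp1 hp2
    set j : Fin n := ⟨k - 1, by omega⟩ with hj
    -- pointwise identity on Ioi 0
    have key : Set.EqOn (fun t => max (worstCase pbar x t - p) 0)
        (fun t => (∑ i : Fin n, if k ≤ (i : ℕ) ∧ 0 ≤ t ∧ t < x i then pbar i else 0)
          + (if 0 ≤ t ∧ t < x j then cumPower pbar k - p else 0)) (Set.Ioi 0) := by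
      intro t ht
      simp only [Set.mem_Ioi] at ht
      dsimp only
      by_cases hcase : t < x j
      · -- active region
        have hsplit : worstCase pbar x t = cumPower pbar k
            + ∑ i : Fin n, if k ≤ (i : ℕ) ∧ 0 ≤ t ∧ t < x i then pbar i else 0 := by
          unfold worstCase cumPower
          rw [← Finset.sum_add_distrib]
          apply Finset.sum_congr rfl
          intro i _
          by_cases hik : (i : ℕ) < k
          · have hle : i ≤ j := by rw [hj, Fin.le_def]; show (i:ℕ) ≤ k - 1; omega
            have htx : t < x i := lt_of_lt_of_le hcase (hsorted i j hle)
            simp [hik, htx, ht.le, show ¬ k ≤ (i : ℕ) by omega]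
          · simp [hik, show k ≤ (i : ℕ) by omega, ht.le]
        have hS : (0:ℝ) ≤ ∑ i : Fin n, if k ≤ (i : ℕ) ∧ 0 ≤ t ∧ t < x i then pbar i else 0 := by
          apply Finset.sum_nonneg
          intro i _
          split_ifs
          · exact (hp i).le
          · exact le_rfl
        rw [hsplit, if_pos (show 0 ≤ t ∧ t < x j from ⟨ht.le, hcase⟩),
          max_eq_left (by linarith)]
        ring
      · -- inactive region
        have hR : worstCase pbar x t ≤ cumPower pbar (k - 1) := by
          unfold worstCase cumPower
          apply Finset.sum_le_sum
          intro i _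
          by_cases h : 0 ≤ t ∧ t < x i
          · have : (i : ℕ) < k - 1 := by
              by_contra hc
              have hle : j ≤ i := by rw [hj, Fin.le_def]; show k - 1 ≤ (i:ℕ); omega
              have := hsorted j i hle
              push_neg at hcase
              linarith [h.2]
            simp [h, this]
          · simp only [if_neg h]
            split_ifs
            · exact (hp i).le
            · exact le_rfl
        rw [max_eq_right (by linarith)]
        have hzero : ∀ i : Fin n, i ∈ Finset.univ →
            (if k ≤ (i : ℕ) ∧ 0 ≤ t ∧ t < x i then pbar i else 0) = 0 := by
          intro i _
          apply if_neg
          rintro ⟨hki, _, htx⟩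
          have hle : j ≤ i := by rw [hj, Fin.le_def]; show k - 1 ≤ (i:ℕ); omega
          have := hsorted j i hle
          push_neg at hcase
          linarith
        rw [Finset.sum_eq_zero hzero,
          if_neg (show ¬(0 ≤ t ∧ t < x j) from fun h => hcase h.2)]
        ring
    unfold capacity EpTransform
    rw [MeasureTheory.setIntegral_congr_fun measurableSet_Ioi key]
    have hint1 : ∀ i : Fin n, IntegrableOn
        (fun t : ℝ => if k ≤ (i : ℕ) ∧ 0 ≤ t ∧ t < x i then pbar i else 0) (Set.Ioi 0) := by
      intro i
      by_cases hik : k ≤ (i : ℕ)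
      · simp only [hik, true_and]
        exact intOn (x i) (pbar i)
      · simp only [hik, false_and, if_false]
        exact integrableOn_zero
    rw [MeasureTheory.integral_add (integrable_finset_sum _ (fun i _ => hint1 i))
      (intOn (x j) (cumPower pbar k - p)), MeasureTheory.integral_finset_sum _ (fun i _ => hint1 i),
      intVal (x j) _ (hx j)]
    congr 1
    apply Finset.sum_congr rfl
    intro i _
    by_cases hik : k ≤ (i : ℕ)
    · simp only [hik, true_and, if_pos hik]
      exact intVal (x i) (pbar i) (hx i)
    · simp [hik]
  refine ⟨part1, ?_⟩
  intro k hkn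
  rcases Nat.eq_zero_or_pos k with hk0 | hk1
  · subst hk0
    have hc0 : cumPower pbar 0 = 0 := by simp [cumPower]
    rw [hc0]
    unfold capacity EpTransform
    have key : Set.EqOn (fun t => max (worstCase pbar x t - 0) 0)
        (fun t => ∑ i : Fin n, if 0 ≤ t ∧ t < x i then pbar i else 0) (Set.Ioi 0) := by
      intro t _
      simp only [sub_zero]
      apply max_eq_left
      apply Finset.sum_nonneg
      intro i _
      split_ifs
      · exact (hp i).le
      · exact le_rfl
    rw [MeasureTheory.setIntegral_congr_fun measurableSet_Ioi key,
      MeasureTheory.integral_finset_sum _ (fun i _ => intOn (x i) (pbar i))]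
    apply Finset.sum_congr rfl
    intro i _
    simp only [Nat.zero_le, if_true]
    exact intVal (x i) (pbar i) (hx i)
  · have hmono : cumPower pbar (k - 1) ≤ cumPower pbar k := by
      apply Finset.sum_le_sum
      intro i _
      split_ifs with h1 h2 h2
      · exact le_rfl
      · omega
      · exact (hp i).le
      · exact le_rfl
    rw [part1 k hk1 hkn (cumPower pbar k) hmono le_rfl, sub_self, zero_mul, add_zero]
end

section
/- (Theorem 1) Let P^d be a discharging request, let x* ≥ 0, set x̃ᵢ = min{xᵢ, x*} and E^d = Σᵢ p̄ᵢ·min{xᵢ, x*}, and suppose ∫₀^∞ P^d(t) dt ≤ E^d. Then P^d is feasible for the fleet (p̄, x) if and only if P^d is feasible for the truncated fleet (p̄, x̃). -/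
open MeasureTheory Set Finset

/-- Feasibility of a discharging request `Pd` for the fleet `(p̄, x)`. -/
def Feasible {n : ℕ} (pbar x : Fin n → ℝ) (Pd : ℝ → ℝ) : Prop :=
  ∃ u : Fin n → ℝ → ℝ,
    (∀ i, MeasureTheory.IntegrableOn (u i) (Set.Ioi 0)) ∧
    (∀ᵐ t ∂(MeasureTheory.volume.restrict (Set.Ioi (0:ℝ))),
      (∀ i, 0 ≤ u i t ∧ u i t ≤ pbar i) ∧ (∑ i, u i t) = Pd t) ∧
    (∀ t ≥ (0:ℝ), ∀ i, 0 ≤ x i - (1 / pbar i) * ∫ s in Set.Ioc (0:ℝ) t, u i s)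

def Good {n : ℕ} (pbar : Fin n → ℝ) (Pd : ℝ → ℝ) (u : Fin n → ℝ → ℝ) : Prop :=
  (∀ i, MeasureTheory.IntegrableOn (u i) (Set.Ioi 0)) ∧
  (∀ᵐ t ∂(MeasureTheory.volume.restrict (Set.Ioi (0:ℝ))),
    (∀ i, 0 ≤ u i t ∧ u i t ≤ pbar i) ∧ (∑ i, u i t) = Pd t)

set_option maxHeartbeats 2000000 in
lemma key_mix {n : ℕ} (pbar : Fin n → ℝ) (hp : ∀ i, 0 < pbar i) (Pd : ℝ → ℝ)
    (E : Fin n → ℝ) (xstar : ℝ) (hxs : 0 ≤ xstar) (hEb : ∀ i, E i ≤ pbar i * xstar) :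
    ∀ (k : ℕ) (u : Fin n → ℝ → ℝ) (a : Fin n → ℝ),
      Good pbar Pd u →
      (∀ i, (∫ t in Set.Ioi (0:ℝ), u i t) = a i) →
      (∀ i, 0 ≤ a i) →
      (∀ i, E i < a i → E i = pbar i * xstar) →
      (∑ i, a i ≤ ∑ i, E i) →
      ((Finset.univ.filter (fun i => a i ≠ E i)).card ≤ k) →
      ∃ v, Good pbar Pd v ∧ ∀ i, (∫ t in Set.Ioi (0:ℝ), v i t) ≤ E i := by
  intro k
  induction k with
  | zero =>
    intro u a hGood hInt ha0 hviol hsum hcard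
    have hempty : (Finset.univ.filter (fun i => a i ≠ E i)) = ∅ :=
      Finset.card_eq_zero.mp (Nat.le_zero.mp hcard)
    refine ⟨u, hGood, fun i => ?_⟩
    have : a i = E i := by
      by_contra h
      have : i ∈ Finset.univ.filter (fun i => a i ≠ E i) := by
        simp [h]
      simp [hempty] at this
    rw [hInt i, this]
  | succ k IH =>
    intro u a hGood hInt ha0 hviol hsum hcard
    by_cases hall : ∀ i, a i ≤ E i
    · exact ⟨u, hGood, fun i => (hInt i) ▸ hall i⟩
    push_neg at hall
    obtain ⟨j, hj⟩ := hall
    have hrec : ∃ i, a i < E i := by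
      by_contra hc; push_neg at hc
      have : ∑ i, E i < ∑ i, a i :=
        Finset.sum_lt_sum (fun i _ => hc i) ⟨j, Finset.mem_univ j, hj⟩
      linarith
    obtain ⟨i, hi⟩ := hrec
    have hij : i ≠ j := by
      intro h; subst h; linarith
    have hEj : E j = pbar j * xstar := hviol j hj
    have hpi := hp i; have hpj := hp j
    set δ : ℝ := min (E i - a i) (a j - pbar j * xstar) with hδdef
    clear_value δ
    have hδ1 : δ ≤ E i - a i := by rw [hδdef]; exact min_le_left _ _
    have hδ2 : δ ≤ a j - pbar j * xstar := by rw [hδdef]; exact min_le_right _ _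
    have hδpos : 0 < δ := by
      rw [hδdef]; exact lt_min (by linarith) (by rw [← hEj]; linarith)
    set D : ℝ := a j / pbar j - a i / pbar i with hDdef
    clear_value D
    have hri : a i / pbar i < xstar := by
      have h1 : a i / pbar i < E i / pbar i := by gcongr
      have h2 : E i / pbar i ≤ xstar := by
        rw [div_le_iff₀ hpi]; linarith [hEb i]
      linarith
    have hrj : xstar < a j / pbar j := by
      rw [lt_div_iff₀ hpj]; rw [hEj] at hj; linarith
    have hDpos : 0 < D := by rw [hDdef]; linarith
    have hpiD : 0 < pbar i * D := mul_pos hpi hDpos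
    have hpjD : 0 < pbar j * D := mul_pos hpj hDpos
    set σ : ℝ := δ / (pbar i * D) with hσdef
    set τ : ℝ := δ / (pbar j * D) with hτdef
    clear_value σ τ
    have hσ0 : 0 ≤ σ := by rw [hσdef]; exact le_of_lt (div_pos hδpos hpiD)
    have hτ0 : 0 ≤ τ := by rw [hτdef]; exact le_of_lt (div_pos hδpos hpjD)
    have hσp : σ * pbar i = δ / D := by
      rw [hσdef, div_mul_eq_mul_div, mul_comm (pbar i) D]
      exact mul_div_mul_right _ _ (ne_of_gt hpi)
    have hτp : τ * pbar j = δ / D := by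
      rw [hτdef, div_mul_eq_mul_div, mul_comm (pbar j) D]
      exact mul_div_mul_right _ _ (ne_of_gt hpj)
    have hσa : σ * a i = (δ / D) * (a i / pbar i) := by
      rw [hσdef, div_mul_eq_mul_div, div_mul_div_comm, mul_comm D (pbar i)]
    have hτa : τ * a j = (δ / D) * (a j / pbar j) := by
      rw [hτdef, div_mul_eq_mul_div, div_mul_div_comm, mul_comm D (pbar j)]
    have hkey : τ * a j - σ * a i = δ := by
      rw [hσa, hτa, ← mul_sub, ← hDdef, div_mul_cancel₀]
      exact ne_of_gt hDpos
    have hσ1 : σ ≤ 1 := by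
      rw [hσdef, div_le_one hpiD]
      have h1 : pbar i * xstar ≤ pbar i * (a j / pbar j) := by
        apply mul_le_mul_of_nonneg_left (le_of_lt hrj) (le_of_lt hpi)
      have h2 : pbar i * (a i / pbar i) = a i := by field_simp
      have h3 : pbar i * D = pbar i * (a j / pbar j) - a i := by
        rw [hDdef, mul_sub, h2]
      linarith [hEb i]
    have hτ1 : τ ≤ 1 := by
      rw [hτdef, div_le_one hpjD]
      have h1 : pbar j * (a i / pbar i) ≤ pbar j * xstar := by
        apply mul_le_mul_of_nonneg_left (le_of_lt hri) (le_of_lt hpj)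
      have h2 : pbar j * (a j / pbar j) = a j := by field_simp
      have h3 : pbar j * D = a j - pbar j * (a i / pbar i) := by
        rw [hDdef, mul_sub, h2]
      linarith
    -- new controls
    obtain ⟨u', hu'i, hu'j, hu'o⟩ :
        ∃ u' : Fin n → ℝ → ℝ,
          u' i = (fun t => (1 - σ) * u i t + τ * u j t) ∧
          u' j = (fun t => σ * u i t + (1 - τ) * u j t) ∧
          (∀ k, k ≠ i → k ≠ j → u' k = u k) := by
      refine ⟨fun k => if k = i then (fun t => (1 - σ) * u i t + τ * u j t)
        else if k = j then (fun t => σ * u i t + (1 - τ) * u j t) else u k, ?_, ?_, ?_⟩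
      · simp
      · simp [Ne.symm hij]
      · intro k h1 h2; simp [h1, h2]
    obtain ⟨a', ha'i, ha'j, ha'o⟩ :
        ∃ a' : Fin n → ℝ, a' i = a i + δ ∧ a' j = a j - δ ∧
          (∀ k, k ≠ i → k ≠ j → a' k = a k) := by
      refine ⟨fun k => if k = i then a i + δ else if k = j then a j - δ else a k, ?_, ?_, ?_⟩
      · simp
      · simp [Ne.symm hij]
      · intro k h1 h2; simp [h1, h2]
    have hint_i := hGood.1 i
    have hint_j := hGood.1 j
    have hGood' : Good pbar Pd u' := by
      constructor
      · intro k
        by_cases hk : k = i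
        · subst hk; rw [hu'i]
          exact (hint_i.const_mul _).add (hint_j.const_mul _)
        · by_cases hk' : k = j
          · subst hk'; rw [hu'j]
            exact (hint_i.const_mul _).add (hint_j.const_mul _)
          · rw [hu'o k hk hk']
            exact hGood.1 k
      · filter_upwards [hGood.2] with t ht
        obtain ⟨hb, hsumt⟩ := ht
        constructor
        · intro k
          by_cases hk : k = i
          · subst hk
            simp only [hu'i]
            constructor
            · have h1 : 0 ≤ (1 - σ) * u k t := mul_nonneg (by linarith) (hb k).1
              have h2 : 0 ≤ τ * u j t := mul_nonneg hτ0 (hb j).1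
              linarith
            · have h1 : (1 - σ) * u k t ≤ (1 - σ) * pbar k :=
                mul_le_mul_of_nonneg_left (hb k).2 (by linarith)
              have h2 : τ * u j t ≤ τ * pbar j :=
                mul_le_mul_of_nonneg_left (hb j).2 hτ0
              nlinarith [hσp, hτp]
          · by_cases hk' : k = j
            · subst hk'
              simp only [hu'j]
              constructor
              · have h1 : 0 ≤ σ * u i t := mul_nonneg hσ0 (hb i).1
                have h2 : 0 ≤ (1 - τ) * u k t := mul_nonneg (by linarith) (hb k).1
                linarith
              · have h1 : σ * u i t ≤ σ * pbar i :=
                  mul_le_mul_of_nonneg_left (hb i).2 hσ0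
                have h2 : (1 - τ) * u k t ≤ (1 - τ) * pbar k :=
                  mul_le_mul_of_nonneg_left (hb k).2 (by linarith)
                nlinarith [hσp, hτp]
            · rw [hu'o k hk hk']
              exact hb k
        · have hsplit : ∀ k, u' k t =
              u k t + ((if k = i then (τ * u j t - σ * u i t) else 0)
                + (if k = j then (σ * u i t - τ * u j t) else 0)) := by
            intro k
            by_cases hk : k = i
            · subst hk
              rw [if_pos rfl, if_neg hij]
              simp only [hu'i]; ring
            · by_cases hk' : k = j
              · subst hk'
                rw [if_neg hk, if_pos rfl]
                simp only [hu'j]; ring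
              · rw [if_neg hk, if_neg hk', hu'o k hk hk']; ring
          calc ∑ k, u' k t
              = ∑ k, (u k t + ((if k = i then (τ * u j t - σ * u i t) else 0)
                + (if k = j then (σ * u i t - τ * u j t) else 0))) :=
                Finset.sum_congr rfl (fun k _ => hsplit k)
            _ = Pd t := by
                rw [Finset.sum_add_distrib, Finset.sum_add_distrib,
                  Finset.sum_ite_eq' Finset.univ i, Finset.sum_ite_eq' Finset.univ j]
                simp only [Finset.mem_univ, if_pos]
                rw [hsumt]; ring
    have hInt' : ∀ k, (∫ t in Set.Ioi (0:ℝ), u' k t) = a' k := by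
      intro k
      by_cases hk : k = i
      · subst hk
        have h1 : (∫ t in Set.Ioi (0:ℝ), u' k t)
            = (1 - σ) * (∫ t in Set.Ioi (0:ℝ), u k t) + τ * (∫ t in Set.Ioi (0:ℝ), u j t) := by
          simp only [hu'i]
          rw [integral_add (hint_i.const_mul _) (hint_j.const_mul _),
            integral_const_mul, integral_const_mul]
        rw [h1, hInt k, hInt j, ha'i]
        linarith [hkey]
      · by_cases hk' : k = j
        · subst hk'
          have h1 : (∫ t in Set.Ioi (0:ℝ), u' k t)
              = σ * (∫ t in Set.Ioi (0:ℝ), u i t) + (1 - τ) * (∫ t in Set.Ioi (0:ℝ), u k t) := by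
            simp only [hu'j]
            rw [integral_add (hint_i.const_mul _) (hint_j.const_mul _),
              integral_const_mul, integral_const_mul]
          rw [h1, hInt i, hInt k, ha'j]
          linarith [hkey]
        · rw [hu'o k hk hk', ha'o k hk hk']
          exact hInt k
    have ha0' : ∀ k, 0 ≤ a' k := by
      intro k
      by_cases hk : k = i
      · subst hk; rw [ha'i]; linarith [ha0 k]
      · by_cases hk' : k = j
        · subst hk'; rw [ha'j]
          have hpx : 0 ≤ pbar k * xstar := mul_nonneg (le_of_lt hpj) hxs
          linarith
        · rw [ha'o k hk hk']; exact ha0 k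
    have hviol' : ∀ k, E k < a' k → E k = pbar k * xstar := by
      intro k hk2
      by_cases hk : k = i
      · subst hk; rw [ha'i] at hk2; linarith
      · by_cases hk' : k = j
        · subst hk'; exact hEj
        · rw [ha'o k hk hk'] at hk2
          exact hviol k hk2
    have hsum' : ∑ k, a' k ≤ ∑ k, E k := by
      have hsplit : ∀ k, a' k =
          a k + ((if k = i then δ else 0) + (if k = j then -δ else 0)) := by
        intro k
        by_cases hk : k = i
        · subst hk; rw [if_pos rfl, if_neg hij, ha'i]; ring
        · by_cases hk' : k = j
          · subst hk'; rw [if_neg hk, if_pos rfl, ha'j]; ring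
          · rw [if_neg hk, if_neg hk', ha'o k hk hk']; ring
      have heq : ∑ k, a' k = ∑ k, a k := by
        calc ∑ k, a' k
            = ∑ k, (a k + ((if k = i then δ else 0) + (if k = j then -δ else 0))) :=
              Finset.sum_congr rfl (fun k _ => hsplit k)
          _ = ∑ k, a k := by
              rw [Finset.sum_add_distrib, Finset.sum_add_distrib,
                Finset.sum_ite_eq' Finset.univ i, Finset.sum_ite_eq' Finset.univ j]
              simp only [Finset.mem_univ, if_pos]
              ring
      linarith
    -- cardinality decrease
    have hmem_i : i ∈ Finset.univ.filter (fun k => a k ≠ E k) := by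
      simp [ne_of_lt hi]
    have hmem_j : j ∈ Finset.univ.filter (fun k => a k ≠ E k) := by
      simp [(ne_of_lt hj).symm]
    have hcard' : (Finset.univ.filter (fun k => a' k ≠ E k)).card ≤ k := by
      rcases le_total (E i - a i) (a j - pbar j * xstar) with hm | hm
      · have hδeq : δ = E i - a i := by rw [hδdef]; exact min_eq_left hm
        have hsub : Finset.univ.filter (fun k => a' k ≠ E k)
            ⊆ (Finset.univ.filter (fun k => a k ≠ E k)).erase i := by
          intro k hk
          simp only [Finset.mem_filter, Finset.mem_univ, true_and] at hk
          rw [Finset.mem_erase]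
          by_cases hki : k = i
          · exfalso; apply hk; subst hki; rw [ha'i]; linarith
          · refine ⟨hki, ?_⟩
            simp only [Finset.mem_filter, Finset.mem_univ, true_and]
            by_cases hkj : k = j
            · subst hkj; exact (ne_of_lt hj).symm
            · rw [ha'o k hki hkj] at hk
              exact hk
        calc (Finset.univ.filter (fun k => a' k ≠ E k)).card
            ≤ ((Finset.univ.filter (fun k => a k ≠ E k)).erase i).card :=
              Finset.card_le_card hsub
          _ = (Finset.univ.filter (fun k => a k ≠ E k)).card - 1 :=
              Finset.card_erase_of_mem hmem_i
          _ ≤ k := by omega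
      · have hδeq : δ = a j - pbar j * xstar := by rw [hδdef]; exact min_eq_right hm
        have hsub : Finset.univ.filter (fun k => a' k ≠ E k)
            ⊆ (Finset.univ.filter (fun k => a k ≠ E k)).erase j := by
          intro k hk
          simp only [Finset.mem_filter, Finset.mem_univ, true_and] at hk
          rw [Finset.mem_erase]
          by_cases hkj : k = j
          · exfalso; apply hk; subst hkj; rw [ha'j, hEj]; linarith
          · refine ⟨hkj, ?_⟩
            simp only [Finset.mem_filter, Finset.mem_univ, true_and]
            by_cases hki : k = i
            · subst hki; exact ne_of_lt hi
            · rw [ha'o k hki hkj] at hk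
              exact hk
        calc (Finset.univ.filter (fun k => a' k ≠ E k)).card
            ≤ ((Finset.univ.filter (fun k => a k ≠ E k)).erase j).card :=
              Finset.card_le_card hsub
          _ = (Finset.univ.filter (fun k => a k ≠ E k)).card - 1 :=
              Finset.card_erase_of_mem hmem_j
          _ ≤ k := by omega
    exact IH u' a' hGood' hInt' ha0' hviol' hsum' hcard'

lemma integral_Ioi_le_of_Ioc (f : ℝ → ℝ) (hf : IntegrableOn f (Set.Ioi 0)) (c : ℝ)
    (h : ∀ t : ℝ, t ≥ 0 → (∫ s in Set.Ioc (0:ℝ) t, f s) ≤ c) :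
    (∫ s in Set.Ioi (0:ℝ), f s) ≤ c := by
  have hU : (⋃ n : ℕ, Set.Ioc (0:ℝ) n) = Set.Ioi 0 := by
    ext t
    simp only [Set.mem_iUnion, Set.mem_Ioc, Set.mem_Ioi]
    constructor
    · rintro ⟨n, h1, _⟩; exact h1
    · intro ht
      obtain ⟨n, hn⟩ := exists_nat_ge t
      exact ⟨n, ht, hn⟩
  have hmono : Monotone (fun n : ℕ => Set.Ioc (0:ℝ) n) := by
    intro m k hmk
    exact Set.Ioc_subset_Ioc le_rfl (by exact_mod_cast hmk)
  have htend := MeasureTheory.tendsto_setIntegral_of_monotone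
    (fun n : ℕ => measurableSet_Ioc) hmono (hU ▸ hf)
  rw [hU] at htend
  exact le_of_tendsto htend (Filter.Eventually.of_forall fun n => h n (Nat.cast_nonneg n))

lemma integral_Ioc_le_Ioi (f : ℝ → ℝ) (hf : IntegrableOn f (Set.Ioi 0))
    (h0 : 0 ≤ᵐ[volume.restrict (Set.Ioi (0:ℝ))] f) (t : ℝ) :
    (∫ s in Set.Ioc (0:ℝ) t, f s) ≤ ∫ s in Set.Ioi (0:ℝ), f s := by
  apply setIntegral_mono_set hf h0
  exact HasSubset.Subset.eventuallyLE Set.Ioc_subset_Ioi_self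

/-- Theorem 1: if the total energy of a discharging request is at most
`E^d = Σᵢ p̄ᵢ·min{xᵢ, x*}`, then feasibility for the fleet `(p̄, x)` is equivalent to
feasibility for the truncated fleet `(p̄, x̃)` with `x̃ᵢ = min{xᵢ, x*}`. -/
theorem feasible_iff_feasible_truncated {n : ℕ} (pbar x : Fin n → ℝ)
    (hp : ∀ i, 0 < pbar i) (hx : ∀ i, 0 ≤ x i)
    (Pd : ℝ → ℝ) (hInt : MeasureTheory.IntegrableOn Pd (Set.Ioi 0))
    (hPos : ∀ t ≥ (0:ℝ), 0 ≤ Pd t)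
    (xs : ℝ) (hxs : 0 ≤ xs)
    (hE : (∫ t in Set.Ioi (0:ℝ), Pd t) ≤ ∑ i, pbar i * min (x i) xs) :
    Feasible pbar x Pd ↔ Feasible pbar (fun i => min (x i) xs) Pd := by
  constructor
  · rintro ⟨u, hInt_u, hae, hSOC⟩
    have hGood : Good pbar Pd u := ⟨hInt_u, hae⟩
    have hub : ∀ i, (∫ t in Set.Ioi (0:ℝ), u i t) ≤ pbar i * x i := by
      intro i
      apply integral_Ioi_le_of_Ioc _ (hInt_u i)
      intro t ht
      have hs := hSOC t ht i
      have hpi := hp i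
      rw [sub_nonneg] at hs
      calc ∫ s in Set.Ioc (0:ℝ) t, u i s
          = pbar i * ((1 / pbar i) * ∫ s in Set.Ioc (0:ℝ) t, u i s) := by
            field_simp
        _ ≤ pbar i * x i := mul_le_mul_of_nonneg_left hs (le_of_lt hpi)
    have hnn : ∀ i, 0 ≤ᵐ[volume.restrict (Set.Ioi (0:ℝ))] u i := by
      intro i
      filter_upwards [hae] with t ht
      exact (ht.1 i).1
    have ha0 : ∀ i, 0 ≤ (∫ t in Set.Ioi (0:ℝ), u i t) := fun i =>
      integral_nonneg_of_ae (hnn i)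
    have hviol : ∀ i, pbar i * min (x i) xs < (∫ t in Set.Ioi (0:ℝ), u i t) →
        pbar i * min (x i) xs = pbar i * xs := by
      intro i hlt
      rcases le_total (x i) xs with hle | hle
      · exfalso
        rw [min_eq_left hle] at hlt
        exact absurd (hub i) (not_le.mpr hlt)
      · rw [min_eq_right hle]
    have hsumE : ∑ i, (∫ t in Set.Ioi (0:ℝ), u i t) ≤ ∑ i, pbar i * min (x i) xs := by
      have h1 : ∑ i, (∫ t in Set.Ioi (0:ℝ), u i t) = ∫ t in Set.Ioi (0:ℝ), Pd t := by
        rw [← integral_finset_sum _ (fun i _ => hInt_u i)]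
        apply integral_congr_ae
        filter_upwards [hae] with t ht
        exact ht.2
      rw [h1]; exact hE
    obtain ⟨v, hGoodv, hvle⟩ := key_mix pbar hp Pd (fun i => pbar i * min (x i) xs) xs hxs
      (fun i => mul_le_mul_of_nonneg_left (min_le_right _ _) (le_of_lt (hp i)))
      ((Finset.univ.filter
        (fun i => (∫ t in Set.Ioi (0:ℝ), u i t) ≠ pbar i * min (x i) xs)).card)
      u (fun i => ∫ t in Set.Ioi (0:ℝ), u i t) hGood (fun i => rfl) ha0 hviol hsumE le_rfl
    have hvnn : ∀ i, 0 ≤ᵐ[volume.restrict (Set.Ioi (0:ℝ))] v i := by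
      intro i
      filter_upwards [hGoodv.2] with t ht
      exact (ht.1 i).1
    refine ⟨v, hGoodv.1, hGoodv.2, ?_⟩
    intro t ht i
    have hpi := hp i
    have h1 : (∫ s in Set.Ioc (0:ℝ) t, v i s) ≤ pbar i * min (x i) xs :=
      le_trans (integral_Ioc_le_Ioi _ (hGoodv.1 i) (hvnn i) t) (hvle i)
    have h2 : (1 / pbar i) * (∫ s in Set.Ioc (0:ℝ) t, v i s) ≤ min (x i) xs := by
      rw [one_div, inv_mul_le_iff₀ hpi]
      exact h1
    simp only [sub_nonneg]
    exact h2
  · rintro ⟨u, h1, h2, h3⟩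
    refine ⟨u, h1, h2, fun t ht i => ?_⟩
    have hs := h3 t ht i
    have hm : min (x i) xs ≤ x i := min_le_left _ _
    simp only [sub_nonneg] at hs ⊢
    exact le_trans hs hm
end

section
/- For 0 ≤ E^d ≤ Σᵢ p̄ᵢ xᵢ, there exists a unique x* ∈ [0, maxᵢ xᵢ] such that Σᵢ p̄ᵢ·min{xᵢ, x*} = E^d, provided n ≥ 1, p̄ᵢ > 0 for all i, and xᵢ ≥ 0 for all i with maxᵢ xᵢ > 0. -/
open Finset

/-- For any reserved discharge energy `E^d ∈ [0, Σᵢ p̄ᵢxᵢ]`, there is a unique minimum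
discharge time `x* ∈ [0, maxᵢ xᵢ]` with `Σᵢ p̄ᵢ·min{xᵢ, x*} = E^d`. -/
theorem exists_unique_min_discharge_time {n : ℕ} (hn : 0 < n)
    (pbar x : Fin n → ℝ)
    (hp : ∀ i, 0 < pbar i) (hx : ∀ i, 0 ≤ x i)
    (hxmax : 0 < Finset.univ.sup' ⟨⟨0, hn⟩, Finset.mem_univ _⟩ x)
    (Ed : ℝ) (hEd0 : 0 ≤ Ed) (hEdtot : Ed ≤ ∑ i, pbar i * x i) :
    ∃! xs : ℝ, xs ∈ Set.Icc (0:ℝ) (Finset.univ.sup' ⟨⟨0, hn⟩, Finset.mem_univ _⟩ x) ∧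
      (∑ i, pbar i * min (x i) xs) = Ed := by
  set M := Finset.univ.sup' ⟨⟨0, hn⟩, Finset.mem_univ _⟩ x with hM
  set f : ℝ → ℝ := fun t => ∑ i, pbar i * min (x i) t with hfdef
  have hcont : Continuous f := by
    apply continuous_finset_sum
    intro i _
    exact continuous_const.mul (continuous_const.min continuous_id)
  have hf0 : f 0 = 0 := by
    apply Finset.sum_eq_zero
    intro i _
    rw [min_eq_right (hx i)]; ring
  have hfM : f M = ∑ i, pbar i * x i := by
    apply Finset.sum_congr rfl
    intro i _
    rw [min_eq_left (Finset.le_sup' x (Finset.mem_univ i))]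
  obtain ⟨j, -, hj⟩ := Finset.exists_mem_eq_sup' ⟨⟨0, hn⟩, Finset.mem_univ _⟩ x
  have hstrict : ∀ s t : ℝ, s < t → t ≤ M → f s < f t := by
    intro s t hst htM
    apply Finset.sum_lt_sum
    · intro i _
      exact mul_le_mul_of_nonneg_left (min_le_min le_rfl hst.le) (hp i).le
    · refine ⟨j, Finset.mem_univ j, ?_⟩
      have hxj : x j = M := hj.symm
      have h1 : min (x j) s = s := min_eq_right (by rw [hxj]; linarith)
      have h2 : min (x j) t = t := min_eq_right (by rw [hxj]; exact htM)
      rw [h1, h2]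
      exact mul_lt_mul_of_pos_left hst (hp j)
  have hmem : Ed ∈ Set.Icc (f 0) (f M) := ⟨by rw [hf0]; exact hEd0, by rw [hfM]; exact hEdtot⟩
  obtain ⟨xs, hxs, hfxs⟩ := intermediate_value_Icc (le_of_lt hxmax) hcont.continuousOn hmem
  refine ⟨xs, ⟨hxs, hfxs⟩, ?_⟩
  rintro y ⟨hy, hfy⟩
  by_contra hne
  rcases lt_or_gt_of_ne hne with h | h
  · exact absurd (hfy.trans hfxs.symm) (ne_of_lt (hstrict y xs h hxs.2))
  · exact absurd (hfxs.trans hfy.symm) (ne_of_lt (hstrict xs y h hy.2))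
end

section
/- Let Δt > 0, p̄ᵢ > 0, xᵢ ≥ 0, P^d ≥ 0, and suppose ẑ ≥ 0 satisfies Σᵢ p̄ᵢ·max{0, min{xᵢ − ẑ, Δt}} = P^d·Δt. Define u_i = p̄ᵢ·max{0, min{(xᵢ − ẑ)/Δt, 1}}. Then: (i) 0 ≤ u_i ≤ p̄ᵢ for all i; (ii) Σᵢ u_i = P^d; and (iii) the updated states x_i′ = xᵢ − u_iΔt/p̄ᵢ satisfy x_i′ ≥ min{xᵢ, ẑ} ≥ 0 for all i. -/
open Finset

lemma dispatch_key (a Δt : ℝ) (hΔt : 0 < Δt) :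
    max 0 (min (a / Δt) 1) = max 0 (min a Δt) / Δt := by
  rw [eq_div_iff hΔt.ne', max_mul_of_nonneg _ _ hΔt.le, zero_mul,
    min_mul_of_nonneg _ _ hΔt.le, div_mul_cancel₀ _ hΔt.ne', one_mul]

/-- Properties of the default dispatch policy: given a target state `ẑ ≥ 0` satisfying the
energy-balance equation, the allocated inputs `uᵢ = p̄ᵢ·max{0, min{(xᵢ − ẑ)/Δt, 1}}` respect
the device power limits, sum to the request `P^d`, and the updated times-to-go
`xᵢ − uᵢΔt/p̄ᵢ` stay at or above `min{xᵢ, ẑ} ≥ 0`. -/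
theorem dispatch_policy_properties {n : ℕ}
    (pbar x : Fin n → ℝ) (Δt : ℝ) (hΔt : 0 < Δt)
    (hp : ∀ i, 0 < pbar i) (hx : ∀ i, 0 ≤ x i)
    (Pd : ℝ) (hPd : 0 ≤ Pd)
    (zhat : ℝ) (hz : 0 ≤ zhat)
    (hbal : (∑ i, pbar i * max 0 (min (x i - zhat) Δt)) = Pd * Δt) :
    (∀ i, 0 ≤ pbar i * max 0 (min ((x i - zhat) / Δt) 1) ∧
        pbar i * max 0 (min ((x i - zhat) / Δt) 1) ≤ pbar i) ∧
    (∑ i, pbar i * max 0 (min ((x i - zhat) / Δt) 1)) = Pd ∧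
    (∀ i,
        min (x i) zhat ≤
          x i - (pbar i * max 0 (min ((x i - zhat) / Δt) 1)) * Δt / pbar i ∧
        0 ≤ min (x i) zhat) := by
  refine ⟨fun i => ?_, ?_, fun i => ?_⟩
  · constructor
    · exact mul_nonneg (hp i).le (le_max_left _ _)
    · nth_rewrite 2 [← mul_one (pbar i)]
      refine mul_le_mul_of_nonneg_left ?_ (hp i).le
      exact max_le (by norm_num) (min_le_right _ _)
  · have : (∑ i, pbar i * max 0 (min ((x i - zhat) / Δt) 1))
        = (∑ i, pbar i * max 0 (min (x i - zhat) Δt)) / Δt := by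
      rw [sum_div]
      refine Finset.sum_congr rfl fun i _ => ?_
      rw [dispatch_key _ _ hΔt, mul_div_assoc]
    rw [this, hbal, mul_div_cancel_right₀ _ hΔt.ne']
  · refine ⟨?_, le_min (hx i) hz⟩
    have key : pbar i * max 0 (min ((x i - zhat) / Δt) 1) * Δt / pbar i
        = max 0 (min (x i - zhat) Δt) := by
      rw [dispatch_key _ _ hΔt, mul_assoc, div_mul_cancel₀ _ hΔt.ne',
        mul_comm, mul_div_assoc, div_self (hp i).ne', mul_one]
    rw [key]
    rcases le_total (x i - zhat) 0 with h | h
    · rw [max_eq_left (by simpa using min_le_of_left_le h)]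
      simp [min_le_left (x i) zhat, le_of_sub_nonpos]
    · have : min (x i) zhat ≤ zhat := min_le_right _ _
      have h2 : max 0 (min (x i - zhat) Δt) ≤ x i - zhat :=
        max_le (by linarith) (min_le_left _ _)
      linarith
end
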